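/- Let μ⋆ be a Borel probability measure on ℝ^d with a density f⋆ with respect to Lebesgue measure satisfying f⋆(v) ≥ c e^{−z|v|²} for some constants c > 0 and z < ∞. Then for every λ > 0 there exists a constant a_λ < ∞, depending only on λ, c, z and d, such that for every Borel probability measure ξ on ℝ^d with ∫|v|² dξ < ∞, H(g_λ⋆ξ | μ⋆) ≤ a_λ (1 + ∫|v|² dξ), where g_λ⋆ξ is the probability measure with density u ↦ ∫ g_λ(u−v) ξ(dv). -/

import Mathlib

open MeasureTheory
open scoped ENNReal

/-- The Gaussian density `g_λ(x) = (2πλ)^{−d/2} exp(−|x|²/(2λ))` on `ℝ^d`. -/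
noncomputable def gaussDensity (d : ℕ) (lam : ℝ) (x : EuclideanSpace ℝ (Fin d)) : ℝ :=
  (2 * Real.pi * lam) ^ (-(d : ℝ) / 2) * Real.exp (-‖x‖ ^ 2 / (2 * lam))

open Classical in
/-- The relative entropy `H(ν|μ) ∈ [0,∞]` of probability measures, expressed through the
nonnegative integrand `f log f − f + 1` with `f = dν/dμ` (for probability measures this
agrees with `∫ (dν/dμ) log(dν/dμ) dμ`), and `∞` if `ν` is not absolutely continuous. -/
noncomputable def relEnt {α : Type*} [MeasurableSpace α] (ν μ : Measure α) : ℝ≥0∞ :=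
  if ν ≪ μ then
    ∫⁻ x, ENNReal.ofReal ((ν.rnDeriv μ x).toReal * Real.log ((ν.rnDeriv μ x).toReal)
      - (ν.rnDeriv μ x).toReal + 1) ∂μ
  else ⊤

lemma aux_integrable_exp {d : ℕ} {b : ℝ} (hb : 0 < b) :
    Integrable (fun v : EuclideanSpace ℝ (Fin d) => Real.exp (-b * ‖v‖^2)) := by
  have h1 := GaussianFourier.integrable_cexp_neg_mul_sq_norm_add
    (V := EuclideanSpace ℝ (Fin d)) (b := (b:ℂ)) (by simpa using hb) 0 0
  refine h1.norm.congr (Filter.Eventually.of_forall fun v => ?_)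
  simp only [zero_mul, add_zero]
  rw [show -(b:ℂ)*(‖v‖:ℂ)^2 = ((-b*‖v‖^2 : ℝ) : ℂ) by push_cast; ring]
  rw [Complex.norm_exp_ofReal]

lemma aux_mul_exp {β s : ℝ} (hβ : 0 < β) (hs : 0 ≤ s) :
    s * Real.exp (-(2*β) * s) ≤ (1/β) * Real.exp (-β * s) := by
  have hpos : (0:ℝ) < Real.exp (-β * s) := Real.exp_pos _
  have h2 : β * s ≤ Real.exp (β * s) :=
    (lt_add_one (β*s)).le.trans (Real.add_one_le_exp (β*s))
  have hmul : Real.exp (β*s) * Real.exp (-β*s) = 1 := by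
    rw [← Real.exp_add]; simp
  have h3 : s * Real.exp (-β*s) ≤ 1/β := by
    have h4 := mul_le_mul_of_nonneg_right h2 hpos.le
    rw [hmul] at h4
    rw [le_div_iff₀ hβ]
    nlinarith
  have hsplit : Real.exp (-(2*β) * s) = Real.exp (-β*s) * Real.exp (-β*s) := by
    rw [← Real.exp_add]; ring_nf
  calc s * Real.exp (-(2*β) * s) = (s * Real.exp (-β*s)) * Real.exp (-β*s) := by
        rw [hsplit]; ring
    _ ≤ (1/β) * Real.exp (-β*s) := mul_le_mul_of_nonneg_right h3 hpos.le

/-- if `μ⋆` has density `f⋆ ≥ c e^{−z|v|²}` w.r.t. Lebesgue measure, then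
for every `λ > 0` there is a constant `a_λ` (depending only on `λ, c, z, d`) such that
`H(g_λ⋆ξ | μ⋆) ≤ a_λ (1 + ∫|v|² dξ)` for every probability measure `ξ` with finite
second moment. -/
theorem entropy_of_gaussian_convolution_bound (d : ℕ) (c z : ℝ) (hc : 0 < c)
    (lam : ℝ) (hlam : 0 < lam) :
    ∃ a : ℝ, ∀ (fstar : EuclideanSpace ℝ (Fin d) → ℝ), Measurable fstar →
      ∀ (μ : Measure (EuclideanSpace ℝ (Fin d))),
        μ = volume.withDensity (fun v => ENNReal.ofReal (fstar v)) →
        IsProbabilityMeasure μ →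
        (∀ v, c * Real.exp (-z * ‖v‖ ^ 2) ≤ fstar v) →
        ∀ (ξ : Measure (EuclideanSpace ℝ (Fin d))), IsProbabilityMeasure ξ →
          Integrable (fun v => ‖v‖ ^ 2) ξ →
          relEnt (volume.withDensity fun u =>
              ENNReal.ofReal (∫ v, gaussDensity d lam (u - v) ∂ξ)) μ
            ≤ ENNReal.ofReal (a * (1 + ∫ v, ‖v‖ ^ 2 ∂ξ)) := by
  classical
  set E := EuclideanSpace ℝ (Fin d) with hE
  set M : ℝ := (2 * Real.pi * lam) ^ (-(d : ℝ) / 2) with hMdef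
  have hM : 0 < M := Real.rpow_pos_of_pos (by positivity) _
  set β : ℝ := 1/(4*lam) with hβdef
  have hβ : 0 < β := by positivity
  have hGeq : ∀ x : E, gaussDensity d lam x = M * Real.exp (-(2*β) * ‖x‖^2) := by
    intro x
    rw [gaussDensity, ← hMdef]
    congr 2
    rw [hβdef]
    field_simp
    ring
  have hGcont : Continuous (gaussDensity d lam) := by
    unfold gaussDensity
    fun_prop
  have hGmeas : Measurable (gaussDensity d lam) := hGcont.measurable
  have hG0 : ∀ x : E, 0 ≤ gaussDensity d lam x := fun x => by rw [hGeq]; positivity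
  have hGle : ∀ x : E, gaussDensity d lam x ≤ M := by
    intro x
    rw [hGeq]
    refine mul_le_of_le_one_right hM.le (Real.exp_le_one_iff.mpr ?_)
    nlinarith [sq_nonneg ‖x‖]
  set Z : ℝ := max z 0 with hZdef
  set K : ℝ := max (Real.log M - Real.log c) 0 with hKdef
  have hZ : 0 ≤ Z := le_max_right _ _
  have hK : 0 ≤ K := le_max_right _ _
  set r : E → ℝ≥0∞ := fun x => ENNReal.ofReal (‖x‖^2) with hrdef
  have hrmeas : Measurable r := (measurable_norm.pow_const 2).ennreal_ofReal
  set T0 : ℝ≥0∞ := ∫⁻ w : E, ENNReal.ofReal (gaussDensity d lam w) with hT0def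
  set T2 : ℝ≥0∞ := ∫⁻ w : E, r w * ENNReal.ofReal (gaussDensity d lam w) with hT2def
  have hT0fin : T0 ≠ ⊤ := by
    have hi : Integrable (fun w : E => M * Real.exp (-(2*β)*‖w‖^2)) :=
      (aux_integrable_exp (by positivity)).const_mul M
    rw [hT0def, lintegral_congr (fun w => by rw [hGeq])]
    exact hi.lintegral_lt_top.ne
  have hT2fin : T2 ≠ ⊤ := by
    have hi : Integrable (fun w : E => (M * (1/β)) * Real.exp (-β*‖w‖^2)) :=
      (aux_integrable_exp hβ).const_mul _
    have hle : ∀ w : E, r w * ENNReal.ofReal (gaussDensity d lam w)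
        ≤ ENNReal.ofReal ((M * (1/β)) * Real.exp (-β*‖w‖^2)) := by
      intro w
      rw [hrdef, ← ENNReal.ofReal_mul (by positivity)]
      refine ENNReal.ofReal_le_ofReal ?_
      rw [hGeq]
      calc ‖w‖^2 * (M * Real.exp (-(2*β) * ‖w‖^2))
          = M * (‖w‖^2 * Real.exp (-(2*β) * ‖w‖^2)) := by ring
        _ ≤ M * ((1/β) * Real.exp (-β * ‖w‖^2)) := by
            exact mul_le_mul_of_nonneg_left (aux_mul_exp hβ (sq_nonneg _)) hM.le
        _ = (M * (1/β)) * Real.exp (-β*‖w‖^2) := by ring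
    exact ((lintegral_mono hle).trans_lt hi.lintegral_lt_top).ne
  set Q : ℝ≥0∞ := (ENNReal.ofReal K + ENNReal.ofReal Z) * (T0 + 2*T2) with hQdef
  have hQfin : Q ≠ ⊤ := by
    rw [hQdef]
    exact ENNReal.mul_ne_top (by finiteness) (by finiteness)
  set C : ℝ≥0∞ := 1 + 2*Q with hCdef
  have hCfin : C ≠ ⊤ := by finiteness
  refine ⟨C.toReal, ?_⟩
  intro fstar hfmeas μ hμdef hμprob hlow ξ hξprob hξint
  have hfpos : ∀ x, 0 < fstar x := fun x => lt_of_lt_of_le (by positivity) (hlow x)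
  set h : E → ℝ := fun u => ∫ v, gaussDensity d lam (u - v) ∂ξ with hhdef
  set ν : Measure E := volume.withDensity (fun u => ENNReal.ofReal (h u)) with hνdef
  -- measurability of h
  have hsm : StronglyMeasurable (fun p : E × E => gaussDensity d lam (p.1 - p.2)) :=
    (hGcont.comp (continuous_fst.sub continuous_snd)).stronglyMeasurable
  have hhm : Measurable h := hsm.integral_prod_right'.measurable
  -- bounds on h
  have hh0 : ∀ u, 0 ≤ h u := fun u => integral_nonneg fun v => hG0 _
  have hhM : ∀ u, h u ≤ M := by
    intro u
    by_cases hi : Integrable (fun v => gaussDensity d lam (u - v)) ξ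
    · calc h u ≤ ∫ _ : E, M ∂ξ := integral_mono hi (integrable_const M) fun v => hGle _
        _ = M := by rw [integral_const]; simp
    · simp only [hhdef]
      rw [integral_undef hi]
      exact hM.le
  set ψ : E → ℝ≥0∞ := fun x => ENNReal.ofReal (h x) / ENNReal.ofReal (fstar x) with hψdef
  have hψm : Measurable ψ := hhm.ennreal_ofReal.div hfmeas.ennreal_ofReal
  have hν_eq : ν = μ.withDensity ψ := by
    rw [hνdef, hμdef, ← withDensity_mul _ hfmeas.ennreal_ofReal hψm]
    congr 1
    funext x
    show ENNReal.ofReal (h x) = ENNReal.ofReal (fstar x) * ψ x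
    rw [hψdef]
    rw [ENNReal.mul_div_cancel (by simp [ENNReal.ofReal_eq_zero, not_le, hfpos x])
      ENNReal.ofReal_ne_top]
  have habs : ν ≪ μ := hν_eq ▸ withDensity_absolutelyContinuous μ ψ
  have hrn : ν.rnDeriv μ =ᵐ[μ] ψ := hν_eq ▸ Measure.rnDeriv_withDensity μ hψm
  set W : E → ℝ≥0∞ := fun x => ENNReal.ofReal K + ENNReal.ofReal Z * r x with hWdef
  have hWm : Measurable W := measurable_const.add (measurable_const.mul hrmeas)
  -- pointwise a.e. bound on the entropy integrand
  have hbound : ∀ᵐ x ∂μ, ENNReal.ofReal ((ν.rnDeriv μ x).toReal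
      * Real.log ((ν.rnDeriv μ x).toReal) - (ν.rnDeriv μ x).toReal + 1)
      ≤ ν.rnDeriv μ x * W x + 1 := by
    filter_upwards [hrn] with x hx
    rw [hx]
    have hfx := hfpos x
    have hψfin : ψ x ≠ ⊤ := (ENNReal.div_lt_top ENNReal.ofReal_ne_top
      (by simp [ENNReal.ofReal_eq_zero, not_le, hfx])).ne
    set t := (ψ x).toReal with htdef
    have ht0 : 0 ≤ t := ENNReal.toReal_nonneg
    have htval : t = h x / fstar x := by
      rw [htdef, hψdef]
      simp [ENNReal.toReal_div, ENNReal.toReal_ofReal (hh0 x), ENNReal.toReal_ofReal hfx.le]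
    have hlog : t * Real.log t ≤ t * (K + Z*‖x‖^2) := by
      rcases eq_or_lt_of_le ht0 with h0 | h0
      · simp [← h0]
      · have hhx : 0 < h x := by
          by_contra hcon
          push_neg at hcon
          have hz : h x = 0 := le_antisymm hcon (hh0 x)
          rw [htval, hz, zero_div] at h0
          exact lt_irrefl 0 h0
        have hzZ : -Z * ‖x‖^2 ≤ -z * ‖x‖^2 := by
          have : z ≤ Z := le_max_left _ _
          nlinarith [sq_nonneg ‖x‖]
        have hflow : c * Real.exp (-Z*‖x‖^2) ≤ fstar x :=
          le_trans (mul_le_mul_of_nonneg_left (Real.exp_le_exp.mpr hzZ) hc.le) (hlow x)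
        have hflog : Real.log c - Z*‖x‖^2 ≤ Real.log (fstar x) := by
          calc Real.log c - Z*‖x‖^2 = Real.log (c * Real.exp (-Z*‖x‖^2)) := by
                rw [Real.log_mul (ne_of_gt hc) (Real.exp_ne_zero _), Real.log_exp]; ring
            _ ≤ Real.log (fstar x) := Real.log_le_log (by positivity) hflow
        have hlt : Real.log t ≤ K + Z*‖x‖^2 := by
          rw [htval, Real.log_div (ne_of_gt hhx) (ne_of_gt hfx)]
          have h1 : Real.log (h x) ≤ Real.log M := Real.log_le_log hhx (hhM x)
          have h2 : Real.log M - Real.log c ≤ K := le_max_left _ _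
          linarith
        exact mul_le_mul_of_nonneg_left hlt ht0
    have hreal : t * Real.log t - t + 1 ≤ t * (K + Z*‖x‖^2) + 1 := by linarith
    calc ENNReal.ofReal (t * Real.log t - t + 1)
        ≤ ENNReal.ofReal (t*(K+Z*‖x‖^2)+1) := ENNReal.ofReal_le_ofReal hreal
      _ = ψ x * W x + 1 := by
          rw [ENNReal.ofReal_add (by positivity) zero_le_one, ENNReal.ofReal_one,
            ENNReal.ofReal_mul ht0, ENNReal.ofReal_toReal hψfin,
            ENNReal.ofReal_add hK (by positivity), ENNReal.ofReal_mul hZ]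
  haveI : SigmaFinite ν := by rw [hνdef]; infer_instance
  have hI0 : 0 ≤ ∫ v, ‖v‖^2 ∂ξ := integral_nonneg fun v => sq_nonneg _
  set Jξ : ℝ≥0∞ := ∫⁻ v, r v ∂ξ with hJdef
  have hJ : Jξ = ENNReal.ofReal (∫ v, ‖v‖^2 ∂ξ) :=
    (ofReal_integral_eq_lintegral_ofReal hξint
      (Filter.Eventually.of_forall fun v => sq_nonneg _)).symm
  have hWle : ∀ x : E, W x ≤ (ENNReal.ofReal K + ENNReal.ofReal Z) * (1 + r x) := by
    intro x
    rw [hWdef, mul_add, mul_one, add_mul]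
    exact add_le_add le_self_add le_add_self
  have hGv : ∀ u : E, Measurable fun v : E => ENNReal.ofReal (gaussDensity d lam (u-v)) :=
    fun u => (hGmeas.comp (measurable_const.sub measurable_id)).ennreal_ofReal
  have hhle : ∀ u, ENNReal.ofReal (h u)
      ≤ ∫⁻ v, ENNReal.ofReal (gaussDensity d lam (u-v)) ∂ξ := by
    intro u
    by_cases hi : Integrable (fun v => gaussDensity d lam (u - v)) ξ
    · exact le_of_eq (ofReal_integral_eq_lintegral_ofReal hi
        (Filter.Eventually.of_forall fun v => hG0 _))
    · simp only [hhdef]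
      rw [integral_undef hi]
      simp
  have hFmeas : Measurable (fun p : E × E =>
      ENNReal.ofReal (gaussDensity d lam (p.1 - p.2)) * (1 + r p.1)) :=
    ((hGmeas.comp (measurable_fst.sub measurable_snd)).ennreal_ofReal).mul
      (measurable_const.add (hrmeas.comp measurable_fst))
  have hnormsq : ∀ w v : E, r (w + v) ≤ 2 * r w + 2 * r v := by
    intro w v
    have hle2 : ‖w+v‖^2 ≤ 2*‖w‖^2 + 2*‖v‖^2 := by
      have h1 : ‖w+v‖ ≤ ‖w‖ + ‖v‖ := norm_add_le w v
      have h2 : ‖w+v‖^2 ≤ (‖w‖+‖v‖)^2 := by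
        have := norm_nonneg (w+v)
        nlinarith
      nlinarith [sq_nonneg (‖w‖ - ‖v‖)]
    rw [hrdef]
    calc ENNReal.ofReal (‖w+v‖^2) ≤ ENNReal.ofReal (2*‖w‖^2 + 2*‖v‖^2) :=
          ENNReal.ofReal_le_ofReal hle2
      _ = 2 * ENNReal.ofReal (‖w‖^2) + 2 * ENNReal.ofReal (‖v‖^2) := by
          rw [ENNReal.ofReal_add (by positivity) (by positivity),
            ENNReal.ofReal_mul (by norm_num), ENNReal.ofReal_mul (by norm_num)]
          norm_num
  have hinner : ∀ v : E, (∫⁻ u, ENNReal.ofReal (gaussDensity d lam (u-v)) * (1 + r u) ∂volume)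
      ≤ (T0 + 2*T2) + (2 * r v) * T0 := by
    intro v
    have htrans : (∫⁻ u, ENNReal.ofReal (gaussDensity d lam (u-v)) * (1 + r u) ∂volume)
        = ∫⁻ w, ENNReal.ofReal (gaussDensity d lam w) * (1 + r (w + v)) ∂volume := by
      rw [← lintegral_add_right_eq_self
        (fun u => ENNReal.ofReal (gaussDensity d lam (u-v)) * (1 + r u)) v]
      simp [add_sub_cancel_right]
    rw [htrans]
    calc ∫⁻ w, ENNReal.ofReal (gaussDensity d lam w) * (1 + r (w+v)) ∂volume
        ≤ ∫⁻ w, ENNReal.ofReal (gaussDensity d lam w) * (1 + (2*r w + 2*r v)) ∂volume := by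
          refine lintegral_mono fun w => mul_le_mul_right (add_le_add_right (hnormsq w v) 1) _
      _ = ∫⁻ w, (ENNReal.ofReal (gaussDensity d lam w)
            + (2 * (r w * ENNReal.ofReal (gaussDensity d lam w))
            + (2 * r v) * ENNReal.ofReal (gaussDensity d lam w))) ∂volume := by
          refine lintegral_congr fun w => ?_
          ring
      _ = T0 + (2*T2 + (2 * r v) * T0) := by
          rw [lintegral_add_left hGmeas.ennreal_ofReal,
            lintegral_add_left (show
              Measurable fun w => 2 * (r w * ENNReal.ofReal (gaussDensity d lam w)) from measurable_const.mul (hrmeas.mul hGmeas.ennreal_ofReal)),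
            lintegral_const_mul _ (show Measurable fun w => r w * ENNReal.ofReal (gaussDensity d lam w)
              from hrmeas.mul hGmeas.ennreal_ofReal),
            lintegral_const_mul _ hGmeas.ennreal_ofReal]
      _ = (T0 + 2*T2) + (2 * r v) * T0 := by ring
  have houter : (∫⁻ v, ((T0 + 2*T2) + (2 * r v) * T0) ∂ξ) = (T0 + 2*T2) + 2*T0*Jξ := by
    rw [lintegral_add_right _ (show
        Measurable fun v => 2 * r v * T0 from (measurable_const.mul hrmeas).mul_const T0),
      lintegral_const, measure_univ, mul_one]
    congr 1
    calc ∫⁻ v, (2 * r v) * T0 ∂ξ = ∫⁻ v, (2*T0) * r v ∂ξ := lintegral_congr fun v => by ring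
      _ = 2*T0*Jξ := by rw [lintegral_const_mul _ hrmeas, hJdef, mul_assoc]
  show relEnt ν μ ≤ ENNReal.ofReal (C.toReal * (1 + ∫ v, ‖v‖ ^ 2 ∂ξ))
  rw [relEnt, if_pos habs]
  calc (∫⁻ x, ENNReal.ofReal ((ν.rnDeriv μ x).toReal * Real.log ((ν.rnDeriv μ x).toReal)
          - (ν.rnDeriv μ x).toReal + 1) ∂μ)
      ≤ ∫⁻ x, (ν.rnDeriv μ x * W x + 1) ∂μ := lintegral_mono_ae hbound
    _ = ∫⁻ x, ν.rnDeriv μ x * W x ∂μ + 1 := by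
        rw [lintegral_add_right _ measurable_const, lintegral_const, measure_univ, mul_one]
    _ = (∫⁻ x, W x ∂ν) + 1 := by rw [lintegral_rnDeriv_mul habs hWm.aemeasurable]
    _ ≤ ((ENNReal.ofReal K + ENNReal.ofReal Z) * ∫⁻ x, (1 + r x) ∂ν) + 1 := by
        refine add_le_add_left ?_ 1
        calc ∫⁻ x, W x ∂ν
            ≤ ∫⁻ x, (ENNReal.ofReal K + ENNReal.ofReal Z) * (1 + r x) ∂ν :=
              lintegral_mono hWle
          _ = _ := lintegral_const_mul _ (measurable_const.add hrmeas)
    _ = ((ENNReal.ofReal K + ENNReal.ofReal Z)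
          * ∫⁻ u, ENNReal.ofReal (h u) * (1 + r u) ∂volume) + 1 := by
        rw [hνdef, lintegral_withDensity_eq_lintegral_mul _ hhm.ennreal_ofReal
          (show Measurable fun x => 1 + r x from measurable_const.add hrmeas)]
        rfl
    _ ≤ ((ENNReal.ofReal K + ENNReal.ofReal Z)
          * ∫⁻ u, (∫⁻ v, ENNReal.ofReal (gaussDensity d lam (u-v)) ∂ξ) * (1 + r u) ∂volume)
          + 1 := by
        exact add_le_add_left (mul_le_mul_right
          (lintegral_mono fun u => mul_le_mul_left (hhle u) _) _) 1
    _ = ((ENNReal.ofReal K + ENNReal.ofReal Z)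
          * ∫⁻ u, ∫⁻ v, ENNReal.ofReal (gaussDensity d lam (u-v)) * (1 + r u) ∂ξ ∂volume)
          + 1 := by
        congr 1
        congr 1
        exact lintegral_congr fun u => (lintegral_mul_const _ (hGv u)).symm
    _ = ((ENNReal.ofReal K + ENNReal.ofReal Z)
          * ∫⁻ v, ∫⁻ u, ENNReal.ofReal (gaussDensity d lam (u-v)) * (1 + r u) ∂volume ∂ξ)
          + 1 := by
        rw [lintegral_lintegral_swap hFmeas.aemeasurable]
    _ ≤ ((ENNReal.ofReal K + ENNReal.ofReal Z)
          * ∫⁻ v, ((T0 + 2*T2) + (2 * r v) * T0) ∂ξ) + 1 :=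
        add_le_add_left (mul_le_mul_right (lintegral_mono hinner) _) 1
    _ = ((ENNReal.ofReal K + ENNReal.ofReal Z) * ((T0 + 2*T2) + 2*T0*Jξ)) + 1 := by
        rw [houter]
    _ ≤ C * (1 + Jξ) := by
        have hmono : 2*T0*Jξ ≤ 2*(T0+2*T2)*Jξ := by
          gcongr
          exact le_self_add
        calc ((ENNReal.ofReal K + ENNReal.ofReal Z) * ((T0+2*T2) + 2*T0*Jξ)) + 1
            ≤ ((ENNReal.ofReal K + ENNReal.ofReal Z) * ((T0+2*T2) + 2*(T0+2*T2)*Jξ)) + 1 :=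
              add_le_add_left (mul_le_mul_right (add_le_add_right hmono _) _) 1
          _ = 1 + Q + 2*Q*Jξ := by rw [hQdef]; ring
          _ ≤ (1 + Q + 2*Q*Jξ) + (Jξ + Q) := le_self_add
          _ = (1 + 2*Q) * (1 + Jξ) := by ring
          _ = C * (1 + Jξ) := by rw [hCdef]
    _ = ENNReal.ofReal (C.toReal * (1 + ∫ v, ‖v‖^2 ∂ξ)) := by
        rw [ENNReal.ofReal_mul ENNReal.toReal_nonneg, ENNReal.ofReal_toReal hCfin,
          ENNReal.ofReal_add zero_le_one hI0, ENNReal.ofReal_one, hJ]
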